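/- σ_U(f,P) = 0 if and only if the profile P contains a unanimous strict preference between some pair of candidates that is reversed in the output ranking f(P). -/

import Mathlib

open scoped Classical

noncomputable section

/-- Relative ranking entry of voter `i` on the pair `(A,B)`. -/
def Xrel {V C : Type*} (P : V → C → C → Prop) (A B : C) (i : V) : ℝ :=
  if P i A B then 1 else if P i B A then 0 else 1/2

/-- The alignment `I_{A,B}(f,P)`: the share of voters ranking `A,B` the same way as the
output ranking `f(P)`, with ties counting as half agreement. -/
def align {V C : Type*} [Fintype V] (f : (V → C → C → Prop) → C → C → Prop)
    (P : V → C → C → Prop) (A B : C) : ℝ :=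
  if f P A B then (∑ i, Xrel P A B i) / (Fintype.card V)
  else (∑ i, Xrel P B A i) / (Fintype.card V)

/-- The misalignment score `M(f,P)`: the minimum alignment over pairs of candidates. -/
def Mmin {V C : Type*} [Fintype V] (f : (V → C → C → Prop) → C → C → Prop)
    (P : V → C → C → Prop) : ℝ :=
  sInf {x : ℝ | ∃ A B : C, A ≠ B ∧ x = align f P A B}

/-- `σ_U(f,P) = M/(1−M)` if `M(f,P) < 1/2`, and `1` otherwise. -/
def sigmaU {V C : Type*} [Fintype V] (f : (V → C → C → Prop) → C → C → Prop)
    (P : V → C → C → Prop) : ℝ :=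
  if Mmin f P < 1/2 then Mmin f P / (1 - Mmin f P) else 1


lemma Xrel_nonneg {V C : Type*} (P : V → C → C → Prop) (A B : C) (i : V) :
    0 ≤ Xrel P A B i := by
  unfold Xrel; split_ifs <;> norm_num

lemma align_nonneg {V C : Type*} [Fintype V]
    (f : (V → C → C → Prop) → C → C → Prop) (P : V → C → C → Prop) (A B : C) :
    0 ≤ align f P A B := by
  unfold align
  split_ifs <;>
    exact div_nonneg (Finset.sum_nonneg fun i _ => Xrel_nonneg P _ _ i) (Nat.cast_nonneg _)

/-- `σ_U(f,P) = 0` if and only if the profile `P` contains a unanimous strict preference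
between some pair of candidates that is reversed in the output ranking `f(P)`. -/
theorem stmt8 {V C : Type*} [Fintype V] [Fintype C]
    (hn : 0 < Fintype.card V) (hC : 2 ≤ Fintype.card C)
    (f : (V → C → C → Prop) → C → C → Prop)
    (hf : ∀ Q : V → C → C → Prop, IsStrictTotalOrder C (f Q))
    (P : V → C → C → Prop) (hP : ∀ i A B, ¬ (P i A B ∧ P i B A)) :
    sigmaU f P = 0 ↔ ∃ A B : C, A ≠ B ∧ (∀ i, P i A B) ∧ f P B A := by
  have hVC : (0:ℝ) < (Fintype.card V : ℝ) := by exact_mod_cast hn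
  set S : Set ℝ := {x : ℝ | ∃ A B : C, A ≠ B ∧ x = align f P A B} with hS
  have hfin : S.Finite := by
    apply Set.Finite.subset (Set.finite_range (fun p : C × C => align f P p.1 p.2))
    rintro x ⟨A, B, _, rfl⟩
    exact ⟨(A, B), rfl⟩
  have hne : S.Nonempty := by
    obtain ⟨A, B, hAB⟩ := Fintype.exists_pair_of_one_lt_card (α := C) (by omega)
    exact ⟨align f P A B, A, B, hAB, rfl⟩
  have hlb : ∀ x ∈ S, (0:ℝ) ≤ x := by
    rintro x ⟨A, B, _, rfl⟩; exact align_nonneg f P A B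
  have hM0 : 0 ≤ Mmin f P := le_csInf hne hlb
  have hasym : ∀ A B : C, f P A B → ¬ f P B A := by
    intro A B h1 h2
    exact (hf P).irrefl A ((hf P).trans _ _ _ h1 h2)
  -- key: align = 0 characterization
  have key : ∀ A B : C, A ≠ B → align f P A B = 0 →
      (∃ A' B' : C, A' ≠ B' ∧ (∀ i, P i A' B') ∧ f P B' A') := by
    intro A B hAB h0
    · 
      have htri : f P A B ∨ A = B ∨ f P B A := by
        by_cases h1 : f P A B
        · exact Or.inl h1
        by_cases h2 : f P B A
        · exact Or.inr (Or.inr h2)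
        exact Or.inr (Or.inl ((hf P).trichotomous A B h1 h2))
      have hsum : ∀ (X Y : C), (∑ i, Xrel P X Y i) / (Fintype.card V) = 0 →
          ∀ i, Xrel P X Y i = 0 := by
        intro X Y hs i
        have : (∑ i, Xrel P X Y i) = 0 := by
          field_simp at hs; simpa using hs
        exact (Finset.sum_eq_zero_iff_of_nonneg
          (fun j _ => Xrel_nonneg P X Y j)).mp this i (Finset.mem_univ i)
      have hX : ∀ (X Y : C) (i : V), Xrel P X Y i = 0 → P i Y X := by
        intro X Y i hx
        unfold Xrel at hx
        split_ifs at hx with h1 h2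
        · norm_num at hx
        · exact h2
        · norm_num at hx
      rcases htri with hfab | heq | hfba
      · -- f P A B, align uses ∑ Xrel P A B
        have h0' : (∑ i, Xrel P A B i) / (Fintype.card V) = 0 := by
          unfold align at h0; rwa [if_pos hfab] at h0
        exact ⟨B, A, hAB.symm, fun i => hX A B i (hsum A B h0' i), hfab⟩
      · exact absurd heq hAB
      · have hnab : ¬ f P A B := fun h => hasym A B h hfba
        have h0' : (∑ i, Xrel P B A i) / (Fintype.card V) = 0 := by
          unfold align at h0; rwa [if_neg hnab] at h0
        exact ⟨A, B, hAB, fun i => hX B A i (hsum B A h0' i), hfba⟩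
  constructor
  · intro h
    unfold sigmaU at h
    split_ifs at h with hlt
    · have hM : Mmin f P = 0 := by
        rcases div_eq_zero_iff.mp h with h' | h'
        · exact h'
        · exfalso; nlinarith
      have hmem : (0:ℝ) ∈ S := hM ▸ hne.csInf_mem hfin
      obtain ⟨A, B, hAB, h0⟩ := hmem
      exact key A B hAB h0.symm
    · norm_num at h
  · rintro ⟨A, B, hAB, hall, hba⟩
    have hnab : ¬ f P A B := fun h => hasym A B h hba
    have hXz : ∀ i, Xrel P B A i = 0 := by
      intro i
      unfold Xrel
      rw [if_neg (fun h => hP i A B ⟨hall i, h⟩), if_pos (hall i)]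
    have h0 : align f P A B = 0 := by
      unfold align
      rw [if_neg hnab]
      simp [hXz]
    have hle : Mmin f P ≤ 0 := csInf_le hfin.bddBelow ⟨A, B, hAB, h0.symm⟩
    have hM : Mmin f P = 0 := le_antisymm hle hM0
    unfold sigmaU
    rw [hM]
    norm_num
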